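/- arXiv:1907.08063 — 3 statements merged into one kernel-verified Lean document; each statement's English description precedes it below -/
import Mathlib

section
/- The function $g(p) = 1 + 2\log_2\frac{p}{1-p} - \log_2\frac{1-2p}{1-p} - H_2(p)$ is strictly increasing on $(0, 1/2)$ and has exactly one zero $p^* \in (0, 1/2)$. -/
open Real

noncomputable def binEnt (x : ℝ) : ℝ := -(x * Real.logb 2 x) - (1 - x) * Real.logb 2 (1 - x)

noncomputable def Hfun (p : ℝ) : ℝ :=
  1 + ((2 + p) * Real.log p - p * Real.log (1 - p) - Real.log (1 - 2 * p)) / Real.log 2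

lemma l2pos : (0:ℝ) < Real.log 2 := Real.log_pos (by norm_num)

lemma key {p : ℝ} (h1 : 0 < p) (h2 : p < 1/2) :
    1 + 2 * Real.logb 2 (p / (1 - p))
      - Real.logb 2 ((1 - 2 * p) / (1 - p)) - binEnt p = Hfun p := by
  have hp : p ≠ 0 := ne_of_gt h1
  have h1p : (1:ℝ) - p ≠ 0 := by nlinarith
  have h12p : (1:ℝ) - 2*p ≠ 0 := by nlinarith
  unfold binEnt Hfun
  simp only [Real.logb, Real.log_div hp h1p, Real.log_div h12p h1p]
  field_simp
  ring

-- derivative of Hfun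
lemma hderiv {p : ℝ} (h1 : 0 < p) (h2 : p < 1/2) :
    HasDerivAt Hfun
      ((Real.log p + (2 + p) / p - Real.log (1 - p) + p / (1 - p) + 2 / (1 - 2 * p)) / Real.log 2)
      p := by
  have h1p : (0:ℝ) < 1 - p := by linarith
  have h12p : (0:ℝ) < 1 - 2*p := by linarith
  have d1 : HasDerivAt (fun p : ℝ => (2 + p) * Real.log p)
      (1 * Real.log p + (2 + p) * p⁻¹) p := by
    exact ((hasDerivAt_id p).const_add 2).mul (Real.hasDerivAt_log (ne_of_gt h1))
  have d2 : HasDerivAt (fun p : ℝ => p * Real.log (1 - p))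
      (1 * Real.log (1 - p) + p * ((-1) / (1 - p))) p := by
    have dl : HasDerivAt (fun p : ℝ => Real.log (1 - p)) ((-1) / (1 - p)) p := by
      have : HasDerivAt (fun p : ℝ => 1 - p) (-1) p := by
        simpa using (hasDerivAt_id p).const_sub 1
      simpa [div_eq_mul_inv, mul_comm, Function.comp_def] using
        (Real.hasDerivAt_log (ne_of_gt h1p)).comp p this
    exact (hasDerivAt_id p).mul dl
  have d3 : HasDerivAt (fun p : ℝ => Real.log (1 - 2 * p)) ((-2) / (1 - 2 * p)) p := by
    have : HasDerivAt (fun p : ℝ => 1 - 2 * p) (-2) p := by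
      simpa using ((hasDerivAt_id p).const_mul 2).const_sub 1
    simpa [div_eq_mul_inv, mul_comm, Function.comp_def] using
      (Real.hasDerivAt_log (ne_of_gt h12p)).comp p this
  have := (((d1.sub d2).sub d3).div_const (Real.log 2)).const_add 1
  refine this.congr_deriv ?_
  field_simp
  ring

lemma hmono : StrictMonoOn Hfun (Set.Ioo 0 (1/2)) := by
  have hconv : Convex ℝ (Set.Ioo (0:ℝ) (1/2)) := convex_Ioo _ _
  apply strictMonoOn_of_deriv_pos hconv
  · intro x hx
    exact ((hderiv hx.1 hx.2).differentiableAt.continuousAt).continuousWithinAt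
  · intro x hx
    rw [interior_Ioo] at hx
    obtain ⟨h1, h2⟩ := hx
    rw [(hderiv h1 h2).deriv]
    have h1p : (0:ℝ) < 1 - x := by linarith
    have h12p : (0:ℝ) < 1 - 2*x := by linarith
    apply div_pos _ l2pos
    have hlog : 1 - x⁻¹ ≤ Real.log x := by
      have := Real.log_le_sub_one_of_pos (show (0:ℝ) < x⁻¹ by positivity)
      rw [Real.log_inv] at this
      linarith
    have hlog2 : Real.log (1 - x) ≤ 0 := Real.log_nonpos (by linarith) (by linarith)
    have e1 : (2 + x)/x = 2*x⁻¹ + 1 := by field_simp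
    have e2 : (0:ℝ) ≤ x / (1 - x) := by positivity
    have e3 : (0:ℝ) < 2 / (1 - 2*x) := by positivity
    have hxi : (0:ℝ) < x⁻¹ := by positivity
    rw [e1]
    linarith

lemma l3pos : (0:ℝ) < Real.log 3 := Real.log_pos (by norm_num)

lemma hval14 : Hfun (1/4) < 0 := by
  have e : Hfun (1/4) = -2 - Real.log 3 / (4 * Real.log 2) := by
    unfold Hfun
    have h4 : ((1:ℝ)/4) = ((4:ℝ))⁻¹ := by norm_num
    have h34 : ((1:ℝ) - 1/4) = 3/4 := by norm_num
    have h12 : ((1:ℝ) - 2*(1/4)) = 2⁻¹ := by norm_num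
    rw [h34, h12, h4, Real.log_inv, Real.log_inv,
      Real.log_div (by norm_num) (by norm_num),
      show (4:ℝ) = 2^2 by norm_num, Real.log_pow]
    have := l2pos
    field_simp
    ring
  have := l2pos; have := l3pos
  rw [e]
  have : 0 < Real.log 3 / (4 * Real.log 2) := by positivity
  linarith

lemma hval25 : 0 < Hfun (2/5) := by
  have key2 : 2 * Real.log 3 + 5 * Real.log 5 < 17 * Real.log 2 := by
    have h := Real.log_lt_log (show (0:ℝ) < 3^2 * 5^5 by norm_num)
      (show ((3:ℝ)^2 * 5^5) < 2^17 by norm_num)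
    rw [Real.log_mul (by norm_num) (by norm_num), Real.log_pow, Real.log_pow,
      Real.log_pow] at h
    push_cast at h
    linarith
  have e : Hfun (2/5) = (17 * Real.log 2 - 2 * Real.log 3 - 5 * Real.log 5)
      / (5 * Real.log 2) := by
    unfold Hfun
    have h25 : ((2:ℝ)/5) = 2/5 := rfl
    have h35 : ((1:ℝ) - 2/5) = 3/5 := by norm_num
    have h15 : ((1:ℝ) - 2*(2/5)) = 5⁻¹ := by norm_num
    rw [h35, h15, Real.log_inv, Real.log_div (by norm_num) (by norm_num),
      Real.log_div (by norm_num) (by norm_num)]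
    have := l2pos
    field_simp
    ring
  rw [e]
  apply div_pos (by linarith) (by have := l2pos; linarith)

/-- `g(p) = 1 + 2 log₂(p/(1-p)) - log₂((1-2p)/(1-p)) - H₂(p)` is strictly increasing on
`(0, 1/2)` and has exactly one zero there. -/
theorem trapdoor_tightness_equation :
    StrictMonoOn
      (fun p : ℝ => 1 + 2 * Real.logb 2 (p / (1 - p))
        - Real.logb 2 ((1 - 2 * p) / (1 - p)) - binEnt p)
      (Set.Ioo 0 (1 / 2)) ∧
    (∃! p : ℝ, p ∈ Set.Ioo (0 : ℝ) (1 / 2) ∧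
      1 + 2 * Real.logb 2 (p / (1 - p))
        - Real.logb 2 ((1 - 2 * p) / (1 - p)) - binEnt p = 0) := by
  set G : ℝ → ℝ := fun p : ℝ => 1 + 2 * Real.logb 2 (p / (1 - p))
        - Real.logb 2 ((1 - 2 * p) / (1 - p)) - binEnt p with hG
  have hmonoG : StrictMonoOn G (Set.Ioo 0 (1/2)) := by
    intro a ha b hb hab
    simp only [hG]
    rw [key ha.1 ha.2, key hb.1 hb.2]
    exact hmono ha hb hab
  refine ⟨hmonoG, ?_⟩
  have hcont : ContinuousOn Hfun (Set.Icc (1/4 : ℝ) (2/5)) := by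
    intro x hx
    have h1 : (0:ℝ) < x := by linarith [hx.1]
    have h2 : x < 1/2 := by linarith [hx.2]
    exact ((hderiv h1 h2).differentiableAt.continuousAt).continuousWithinAt
  have hsub := intermediate_value_Icc (show (1:ℝ)/4 ≤ 2/5 by norm_num) hcont
  have h0mem : (0:ℝ) ∈ Set.Icc (Hfun (1/4)) (Hfun (2/5)) :=
    ⟨le_of_lt hval14, le_of_lt hval25⟩
  obtain ⟨c, hc, hc0⟩ := hsub h0mem
  have hcIoo : c ∈ Set.Ioo (0:ℝ) (1/2) := ⟨by linarith [hc.1], by linarith [hc.2]⟩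
  refine ⟨c, ⟨hcIoo, ?_⟩, ?_⟩
  · rw [key hcIoo.1 hcIoo.2]; exact hc0
  · rintro q ⟨hqIoo, hq0⟩
    have hGc : G c = 0 := (key hcIoo.1 hcIoo.2).trans hc0
    have hGq : G q = 0 := hq0
    exact hmonoG.injOn hqIoo hcIoo (hGq.trans hGc.symm)
end

section
/- For $p \in (1/2, 1)$, the quantity $\mu = \frac{(2p-1)\big[-(1+2p)(1-\log_2(2p^2-2p+1)) - 2\log_2(1-p) - 4p\log_2 p\big]}{(1-p)(2-p)}$ is nonnegative. -/
open Real

/-- Nonnegativity of the KKT multiplier `μ(1,1,0,0)` for the BFC of type II: for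
`p ∈ (1/2, 1)`, the displayed quantity is nonnegative. -/
theorem kkt_multiplier_nonneg (p : ℝ) (hp : p ∈ Set.Ioo (1 / 2 : ℝ) 1) :
    0 ≤ (2 * p - 1) *
        (-(1 + 2 * p) * (1 - Real.logb 2 (2 * p ^ 2 - 2 * p + 1))
          - 2 * Real.logb 2 (1 - p) - 4 * p * Real.logb 2 p) /
      ((1 - p) * (2 - p)) := by
  obtain ⟨h1, h2⟩ := hp
  have hp0 : 0 < p := by linarith
  have h1p : 0 < 1 - p := by linarith
  have hq : 0 < 2 * p ^ 2 - 2 * p + 1 := by nlinarith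
  have hL : 0 < Real.log 2 := Real.log_pos (by norm_num)
  set a := Real.log p with ha
  set b := Real.log (1 - p) with hb
  set c := Real.log (2 * p ^ 2 - 2 * p + 1) with hc
  set L := Real.log 2 with hLdef
  -- first log bound
  have B1 : Real.log (2 * p * (1 - p) / (2 * p ^ 2 - 2 * p + 1))
      ≤ 2 * p * (1 - p) / (2 * p ^ 2 - 2 * p + 1) - 1 :=
    Real.log_le_sub_one_of_pos (by positivity)
  have B2 : Real.log (2 * p ^ 2 / (2 * p ^ 2 - 2 * p + 1))
      ≤ 2 * p ^ 2 / (2 * p ^ 2 - 2 * p + 1) - 1 :=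
    Real.log_le_sub_one_of_pos (by positivity)
  have e1 : Real.log (2 * p * (1 - p) / (2 * p ^ 2 - 2 * p + 1)) = L + a + b - c := by
    rw [Real.log_div (by positivity) (by positivity), Real.log_mul (by positivity)
      (by positivity), Real.log_mul (by norm_num) (by positivity)]
  have e2 : Real.log (2 * p ^ 2 / (2 * p ^ 2 - 2 * p + 1)) = L + 2 * a - c := by
    rw [Real.log_div (by positivity) (by positivity), Real.log_mul (by norm_num)
      (by positivity), Real.log_pow]
    push_cast
    ring
  have r1 : 2 * p * (1 - p) / (2 * p ^ 2 - 2 * p + 1) - 1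
      = -(2 * p - 1) ^ 2 / (2 * p ^ 2 - 2 * p + 1) := by
    rw [div_sub_one hq.ne']
    congr 1
    ring
  have r2 : 2 * p ^ 2 / (2 * p ^ 2 - 2 * p + 1) - 1
      = (2 * p - 1) / (2 * p ^ 2 - 2 * p + 1) := by
    rw [div_sub_one hq.ne']
    congr 1
    ring
  rw [e1, r1] at B1
  rw [e2, r2] at B2
  -- multiplied-out versions
  have B1' : (L + a + b - c) * (2 * p ^ 2 - 2 * p + 1) ≤ -(2 * p - 1) ^ 2 := by
    rw [div_eq_mul_inv] at B1
    calc (L + a + b - c) * (2 * p ^ 2 - 2 * p + 1)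
        ≤ (-(2 * p - 1) ^ 2 * (2 * p ^ 2 - 2 * p + 1)⁻¹) * (2 * p ^ 2 - 2 * p + 1) :=
          mul_le_mul_of_nonneg_right B1 (le_of_lt hq)
      _ = -(2 * p - 1) ^ 2 := by rw [mul_assoc, inv_mul_cancel₀ hq.ne', mul_one]
  have B2' : (L + 2 * a - c) * (2 * p ^ 2 - 2 * p + 1) ≤ (2 * p - 1) := by
    rw [div_eq_mul_inv] at B2
    calc (L + 2 * a - c) * (2 * p ^ 2 - 2 * p + 1)
        ≤ ((2 * p - 1) * (2 * p ^ 2 - 2 * p + 1)⁻¹) * (2 * p ^ 2 - 2 * p + 1) :=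
          mul_le_mul_of_nonneg_right B2 (le_of_lt hq)
      _ = (2 * p - 1) := by rw [mul_assoc, inv_mul_cancel₀ hq.ne', mul_one]
  have hN : 0 ≤ -(1 + 2 * p) * L + (1 + 2 * p) * c - 2 * b - 4 * p * a := by
    nlinarith [mul_le_mul_of_nonneg_left B2' (by linarith : (0:ℝ) ≤ 2 * p - 1),
      sq_nonneg (2 * p - 1), hq]
  -- the bracket is nonnegative
  have hF : 0 ≤ -(1 + 2 * p) * (1 - Real.logb 2 (2 * p ^ 2 - 2 * p + 1))
      - 2 * Real.logb 2 (1 - p) - 4 * p * Real.logb 2 p := by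
    have hexp : -(1 + 2 * p) * (1 - Real.logb 2 (2 * p ^ 2 - 2 * p + 1))
        - 2 * Real.logb 2 (1 - p) - 4 * p * Real.logb 2 p
        = (-(1 + 2 * p) * L + (1 + 2 * p) * c - 2 * b - 4 * p * a) / L := by
      rw [Real.logb, Real.logb, Real.logb]
      rw [← hLdef, ← hc, ← hb, ← ha]
      field_simp
      ring
    rw [hexp]
    exact div_nonneg hN (le_of_lt hL)
  apply div_nonneg
  · exact mul_nonneg (by linarith) hF
  · nlinarith
end

section
/- The function $\psi(p) = \log_2\Big(\frac{2p^2-2p+1}{(1-p)^2}\Big) - 1 + \frac{2p(1-2p)}{2p^2-2p+1}$ is nonnegative for all $p \in [1/2, 1)$, and $\psi(1/2) = 0$. -/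
open Real

lemma pade_log {x : ℝ} (hx : 1 ≤ x) : 2 * (x - 1) / (x + 1) ≤ Real.log x := by
  set F : ℝ → ℝ := fun y => Real.log y - 2 * (y - 1) / (y + 1) with hF
  have hmono : MonotoneOn F (Set.Ici (1:ℝ)) := by
    have hderiv : ∀ y ∈ Set.Ioi (1:ℝ), HasDerivAt F (1 / y - 4 / (y + 1) ^ 2) y := by
      intro y hy
      have hy0 : (0:ℝ) < y := lt_trans one_pos hy
      have hy1 : y + 1 ≠ 0 := by positivity
      have h1 : HasDerivAt Real.log (1 / y) y := by
        simpa [one_div] using Real.hasDerivAt_log (ne_of_gt hy0)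
      have h2 : HasDerivAt (fun y : ℝ => 2 * (y - 1) / (y + 1))
          ((2 * (y + 1) - 2 * (y - 1) * 1) / (y + 1) ^ 2) y := by
        exact HasDerivAt.div (by simpa using ((hasDerivAt_id y).sub_const 1).const_mul 2)
          (by simpa using (hasDerivAt_id y).add_const 1) hy1
      have := h1.sub h2
      refine this.congr_deriv ?_
      rw [div_sub_div _ _ (ne_of_gt hy0) (by positivity : ((y:ℝ)+1)^2 ≠ 0), div_sub_div _ _ (ne_of_gt hy0) (by positivity : ((y:ℝ)+1)^2 ≠ 0)]
      ring_nf
    apply monotoneOn_of_deriv_nonneg (convex_Ici 1)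
    · apply ContinuousOn.sub
      · exact Real.continuousOn_log.mono (by intro y hy; simp at hy ⊢; linarith [hy])
      · apply ContinuousOn.div (by fun_prop) (by fun_prop)
        intro y hy; simp at hy; intro h; linarith
    · intro y hy
      rw [interior_Ici] at hy
      exact (hderiv y hy).differentiableAt.differentiableWithinAt
    · intro y hy
      rw [interior_Ici] at hy
      rw [(hderiv y hy).deriv]
      have hy0 : (0:ℝ) < y := lt_trans one_pos hy
      rw [sub_nonneg, div_le_div_iff₀ (by positivity) hy0]
      nlinarith [sq_nonneg (y - 1)]
  have h := hmono (Set.self_mem_Ici) (Set.mem_Ici.mpr hx) hx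
  simpa [hF] using h


lemma kkt_aux (p : ℝ) (hp : p ∈ Set.Ico (1/2 : ℝ) 1) :
      0 ≤ Real.logb 2 ((2 * p ^ 2 - 2 * p + 1) / (1 - p) ^ 2) - 1
        + 2 * p * (1 - 2 * p) / (2 * p ^ 2 - 2 * p + 1) := by
  obtain ⟨hp1, hp2⟩ := hp
  have ha : (0:ℝ) < (1 - p) ^ 2 := by nlinarith
  have hq : (0:ℝ) < 2 * p ^ 2 - 2 * p + 1 := by nlinarith
  have hd : (0:ℝ) < 4 * p ^ 2 - 6 * p + 3 := by nlinarith
  have hl2 : (0:ℝ) < Real.log 2 := Real.log_pos (by norm_num)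
  set q := 2 * p ^ 2 - 2 * p + 1 with hqdef
  set x := q / (2 * (1 - p) ^ 2) with hxdef
  have hx1 : 1 ≤ x := by
    rw [hxdef, le_div_iff₀ (by positivity)]
    nlinarith
  have hpade : 2 * (x - 1) / (x + 1) ≤ Real.log x := pade_log hx1
  have hxval : 2 * (x - 1) / (x + 1) = 2 * (2 * p - 1) / (4 * p ^ 2 - 6 * p + 3) := by
    rw [hxdef]
    rw [hqdef]
    have h2a : ((2:ℝ) * (1 - p) ^ 2) ≠ 0 := by positivity
    field_simp
    ring
  -- key polynomial inequality
  have hlog2 : Real.log 2 ≤ 0.6931471808 := le_of_lt Real.log_two_lt_d9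
  have hkey : Real.log 2 * (2 * p * (2 * p - 1) / q) ≤ 2 * (2 * p - 1) / (4 * p ^ 2 - 6 * p + 3) := by
    rw [mul_div_assoc', div_le_div_iff₀ hq hd]
    have h1 : 0 ≤ 2 * p - 1 := by linarith
    have hpd : (0:ℝ) ≤ p * (4 * p ^ 2 - 6 * p + 3) := mul_nonneg (by linarith) hd.le
    have hpoly : 0.6931471808 * (p * (4 * p ^ 2 - 6 * p + 3)) ≤ q := by
      rw [hqdef]
      nlinarith [sq_nonneg (2 * p - 1), mul_nonneg h1 (by linarith : (0:ℝ) ≤ 1 - p),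
        mul_nonneg (mul_nonneg h1 h1) (by linarith : (0:ℝ) ≤ 1 - p)]
    have h2 : Real.log 2 * (p * (4 * p ^ 2 - 6 * p + 3)) ≤ q :=
      le_trans (mul_le_mul_of_nonneg_right hlog2 hpd) hpoly
    nlinarith [mul_le_mul_of_nonneg_left h2 (by linarith : (0:ℝ) ≤ 2 * (2 * p - 1))]
  have hlogx : Real.log 2 * (2 * p * (2 * p - 1) / q) ≤ Real.log x :=
    le_trans (hxval ▸ hkey) hpade
  -- now rewrite goal
  have hlogb : Real.logb 2 (q / (1 - p) ^ 2) - 1 = Real.log x / Real.log 2 := by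
    rw [Real.logb, hxdef]
    rw [Real.log_div hq.ne' (by positivity), Real.log_div hq.ne' (by positivity),
      Real.log_mul (by norm_num) (by positivity)]
    field_simp
    ring
  rw [hlogb]
  have hneg : 2 * p * (1 - 2 * p) / q = -(2 * p * (2 * p - 1) / q) := by ring_nf
  rw [hneg, ← sub_eq_add_neg, sub_nonneg, le_div_iff₀ hl2, mul_comm]
  exact hlogx

/-- `ψ(p) = log₂((2p²-2p+1)/(1-p)²) - 1 + 2p(1-2p)/(2p²-2p+1)` is nonnegative on
`[1/2, 1)` and vanishes at `p = 1/2`. -/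
theorem kkt_bracket_nonneg :
    (∀ p ∈ Set.Ico (1 / 2 : ℝ) 1,
      0 ≤ Real.logb 2 ((2 * p ^ 2 - 2 * p + 1) / (1 - p) ^ 2) - 1
        + 2 * p * (1 - 2 * p) / (2 * p ^ 2 - 2 * p + 1)) ∧
    Real.logb 2 ((2 * (1 / 2 : ℝ) ^ 2 - 2 * (1 / 2) + 1) / (1 - 1 / 2) ^ 2) - 1
        + 2 * (1 / 2) * (1 - 2 * (1 / 2)) / (2 * (1 / 2 : ℝ) ^ 2 - 2 * (1 / 2) + 1) = 0 := by
  constructor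
  · exact kkt_aux
  · norm_num
end
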